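/- (Lind) Let λ be a Perron number of algebraic degree d over ℚ, and let B be the d × d integer companion matrix of the monic minimal polynomial of λ. If A = (a_{ij}) is an n × n nonnegative integral aperiodic matrix with spectral radius equal to λ, then there exist integer vectors z_1, …, z_n ∈ ℤ^d such that for each 1 ≤ i ≤ n one has B z_i = Σ_{j=1}^n a_{ij} z_j, and such that each z_i = (z_{i1}, …, z_{id}) satisfies z_{i1} + z_{i2} λ + ⋯ + z_{id} λ^{d−1} > 0 (i.e., each z_i lies in the positive half-space for the eigenvalue λ). -/

import Mathlib

open Polynomial

/-- The spectral radius of an integer matrix: the supremum of the moduli of the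
complex roots of its characteristic polynomial. -/
noncomputable def specRad {n : ℕ} (A : Matrix (Fin n) (Fin n) ℤ) : ℝ :=
  sSup {r : ℝ | ∃ μ : ℂ, (A.map (Int.cast : ℤ → ℂ)).charpoly.IsRoot μ ∧ r = ‖μ‖}

/-- A nonnegative integral matrix is aperiodic if some positive power has all
entries strictly positive. -/
def IsAperiodic {n : ℕ} (A : Matrix (Fin n) (Fin n) ℤ) : Prop :=
  ∃ k : ℕ, 0 < k ∧ ∀ i j, 0 < (A ^ k) i j

/-- A Perron number: a real algebraic integer `p ≥ 1` strictly greater than the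
absolute value of each of its other Galois conjugates. -/
def IsPerron (p : ℝ) : Prop :=
  1 ≤ p ∧ IsIntegral ℤ p ∧
    ∀ z : ℂ, (Polynomial.aeval z) (minpoly ℚ p) = 0 → z ≠ (p : ℂ) → ‖z‖ < p

/-- The Perron–Frobenius degree: the smallest size of a nonnegative integral
aperiodic matrix with the given spectral radius. -/
noncomputable def dPF (p : ℝ) : ℕ :=
  sInf {n : ℕ | ∃ A : Matrix (Fin n) (Fin n) ℤ,
    (∀ i j, 0 ≤ A i j) ∧ IsAperiodic A ∧ specRad A = p}

/-- The companion matrix of a monic polynomial `x^d + a_{d-1}x^{d-1} + ⋯ + a_0`: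
subdiagonal entries `1`, last column `(-a_0, …, -a_{d-1})ᵀ`, zeros elsewhere. -/
def companion (p : Polynomial ℤ) : Matrix (Fin p.natDegree) (Fin p.natDegree) ℤ :=
  Matrix.of fun i j =>
    if (i : ℕ) = (j : ℕ) + 1 then 1
    else if (j : ℕ) = p.natDegree - 1 then - p.coeff (i : ℕ) else 0

open Matrix Finset

lemma charpoly_eval' {n : Type*} [Fintype n] [DecidableEq n] {R : Type*} [CommRing R]
    (M : Matrix n n R) (t : R) :
    M.charpoly.eval t = (Matrix.diagonal (fun _ => t) - M).det := by
  rw [Matrix.charpoly, ← Polynomial.coe_evalRingHom, RingHom.map_det]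
  congr 1; ext i j
  by_cases h : i = j <;> simp [Matrix.charmatrix_apply, h]

-- uniqueness of the positive eigenvector direction
lemma kernel_unique {n : ℕ} (hn : 0 < n) (A : Matrix (Fin n) (Fin n) ℝ)
    (k : ℕ) (hpos : ∀ i j, 0 < (A ^ k) i j) (lam : ℝ) (hlam : 0 < lam)
    (x : Fin n → ℝ) (hx : ∀ i, 0 < x i) (hxe : A.mulVec x = lam • x)
    (u : Fin n → ℝ) (hu : A.mulVec u = lam • u) : ∃ c : ℝ, u = c • x := by
  haveI : NeZero n := ⟨hn.ne'⟩
  have hne : (univ : Finset (Fin n)).Nonempty := univ_nonempty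
  set c : ℝ := Finset.univ.inf' hne (fun i => u i / x i) with hc
  refine ⟨c, ?_⟩
  set w : Fin n → ℝ := u - c • x with hw
  have hw0 : ∀ i, 0 ≤ w i := by
    intro i
    have h1 : c ≤ u i / x i := Finset.inf'_le _ (mem_univ i)
    rw [le_div_iff₀ (hx i)] at h1
    simp only [hw, Pi.sub_apply, Pi.smul_apply, smul_eq_mul]
    linarith
  obtain ⟨i0, -, hi0⟩ := Finset.exists_mem_eq_inf' hne (fun i => u i / x i)
  have hwi0 : w i0 = 0 := by
    simp only [hw, Pi.sub_apply, Pi.smul_apply, smul_eq_mul]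
    rw [← hc] at hi0
    rw [hi0, div_mul_cancel₀ _ (hx i0).ne']
    ring
  have hwe : A.mulVec w = lam • w := by
    rw [hw, Matrix.mulVec_sub, hu, Matrix.mulVec_smul, hxe, smul_comm, ← smul_sub]
  have hwpow : ∀ m : ℕ, (A ^ m).mulVec w = lam ^ m • w := by
    intro m
    induction m with
    | zero => simp [Matrix.one_mulVec]
    | succ m ih =>
        rw [pow_succ, ← Matrix.mulVec_mulVec, hwe, Matrix.mulVec_smul, ih, smul_smul,
          ← pow_succ']
  by_cases hwz : w = 0
  · rw [hw] at hwz
    exact sub_eq_zero.1 hwz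
  · exfalso
    obtain ⟨j1, hj1⟩ : ∃ j, 0 < w j := by
      by_contra h
      push_neg at h
      exact hwz (funext fun j => le_antisymm (h j) (hw0 j))
    have h1 : 0 < (A ^ k).mulVec w i0 := by
      rw [Matrix.mulVec, dotProduct]
      have h2 : (A ^ k) i0 j1 * w j1 ≤ ∑ j, (A ^ k) i0 j * w j :=
        Finset.single_le_sum (fun j _ => mul_nonneg (hpos i0 j).le (hw0 j)) (mem_univ j1)
      exact lt_of_lt_of_le (mul_pos (hpos i0 j1) hj1) h2
    rw [hwpow k] at h1
    simp only [Pi.smul_apply, smul_eq_mul, hwi0, mul_zero] at h1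
    exact lt_irrefl 0 h1

lemma pf_exists {n : ℕ} (hn : 0 < n) (A : Matrix (Fin n) (Fin n) ℝ)
    (hA : ∀ i j, 0 ≤ A i j) (k : ℕ) (hk : 0 < k) (hpos : ∀ i j, 0 < (A ^ k) i j) :
    ∃ (r : ℝ) (x : Fin n → ℝ), 0 < r ∧ (∀ i, 0 < x i) ∧ A.mulVec x = r • x ∧
      ∀ (s : ℝ) (u : Fin n → ℝ), (∀ i, 0 ≤ u i) → u ≠ 0 →
        (∀ i, s * u i ≤ A.mulVec u i) → s ≤ r := by
  haveI : NeZero n := ⟨hn.ne'⟩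
  have hne : (univ : Finset (Fin n)).Nonempty := univ_nonempty
  set C : ℝ := ∑ i, ∑ j, A i j with hC
  have hC0 : 0 ≤ C := Finset.sum_nonneg fun i _ => Finset.sum_nonneg fun j _ => hA i j
  set B : Set (ℝ × (Fin n → ℝ)) :=
    (Set.Icc (0:ℝ) C) ×ˢ (Set.univ.pi fun _ : Fin n => Set.Icc (0:ℝ) 1) with hB
  set K : Set (ℝ × (Fin n → ℝ)) :=
    B ∩ ({p | ∑ i, p.2 i = 1} ∩ ⋂ i, {p | p.1 * p.2 i ≤ A.mulVec p.2 i}) with hK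
  have hcont : ∀ i, Continuous fun p : ℝ × (Fin n → ℝ) => A.mulVec p.2 i := by
    intro i
    simp only [Matrix.mulVec, dotProduct]
    exact continuous_finset_sum _ fun j _ =>
      (continuous_const.mul ((continuous_apply j).comp continuous_snd))
  have hBc : IsCompact B :=
    (isCompact_Icc).prod (isCompact_univ_pi fun _ => isCompact_Icc)
  have hclosed : IsClosed K := by
    refine IsClosed.inter (hBc.isClosed) (IsClosed.inter ?_ ?_)
    · exact isClosed_eq (continuous_finset_sum _ fun i _ =>
        (continuous_apply i).comp continuous_snd) continuous_const
    · exact isClosed_iInter fun i =>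
        isClosed_le (continuous_fst.mul ((continuous_apply i).comp continuous_snd)) (hcont i)
  have hKc : IsCompact K := hBc.of_isClosed_subset hclosed Set.inter_subset_left
  have memK : ∀ (t : ℝ) (y : Fin n → ℝ), (t, y) ∈ K ↔
      ((0 ≤ t ∧ t ≤ C) ∧ (∀ i, 0 ≤ y i ∧ y i ≤ 1) ∧ (∑ i, y i = 1) ∧
        ∀ i, t * y i ≤ A.mulVec y i) := by
    intro t y
    simp only [hK, hB, Set.mem_inter_iff, Set.mem_prod, Set.mem_Icc, Set.mem_pi, Set.mem_univ,
      forall_true_left, Set.mem_iInter, Set.mem_setOf_eq, forall_and]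
    tauto
  have hKne : K.Nonempty := by
    refine ⟨(0, fun _ => (n : ℝ)⁻¹), (memK _ _).2 ?_⟩
    have hn' : (0:ℝ) < n := by exact_mod_cast hn
    refine ⟨⟨le_refl 0, hC0⟩, ?_, ?_, ?_⟩
    · intro i
      constructor
      · positivity
      · rw [inv_le_one_iff₀]; right; exact_mod_cast hn
    · rw [Finset.sum_const, Finset.card_univ, Fintype.card_fin, nsmul_eq_mul,
        mul_inv_cancel₀ hn'.ne']
    · intro i
      rw [zero_mul, Matrix.mulVec, dotProduct]
      exact Finset.sum_nonneg fun j _ => mul_nonneg (hA i j) (by positivity)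
  obtain ⟨⟨r, x⟩, hpK, hmax⟩ := hKc.exists_isMaxOn hKne continuous_fst.continuousOn
  obtain ⟨⟨hr0, hrC⟩, hxI, hxs, hxCW⟩ := (memK r x).1 hpK
  -- the Collatz–Wielandt upper bound
  have hub : ∀ (s : ℝ) (u : Fin n → ℝ), (∀ i, 0 ≤ u i) → u ≠ 0 →
      (∀ i, s * u i ≤ A.mulVec u i) → s ≤ r := by
    intro s u hu0 hune hsu
    rcases le_or_gt s 0 with hs | hs
    · exact hs.trans hr0
    obtain ⟨j0, hj0⟩ : ∃ j, 0 < u j := by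
      by_contra h
      push_neg at h
      exact hune (funext fun j => le_antisymm (h j) (hu0 j))
    have hcsum : 0 < ∑ i, u i :=
      lt_of_lt_of_le hj0 (Finset.single_le_sum (fun i _ => hu0 i) (mem_univ j0))
    set c : ℝ := (∑ i, u i)⁻¹ with hc
    have hc0 : 0 < c := inv_pos.2 hcsum
    set u' : Fin n → ℝ := c • u with hu'
    have hu'0 : ∀ i, 0 ≤ u' i := fun i => mul_nonneg hc0.le (hu0 i)
    have hu's : ∑ i, u' i = 1 := by
      rw [hu']
      simp only [Pi.smul_apply, smul_eq_mul, ← Finset.mul_sum]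
      exact inv_mul_cancel₀ hcsum.ne'
    have hu'1 : ∀ i, u' i ≤ 1 := by
      intro i
      calc u' i ≤ ∑ j, u' j := Finset.single_le_sum (fun i _ => hu'0 i) (mem_univ i)
      _ = 1 := hu's
    have hsu' : ∀ i, s * u' i ≤ A.mulVec u' i := by
      intro i
      rw [hu', Matrix.mulVec_smul]
      simpa only [Pi.smul_apply, smul_eq_mul, mul_left_comm] using
        mul_le_mul_of_nonneg_left (hsu i) hc0.le
    have hsC : s ≤ C := by
      have h1 : s = ∑ i, s * u' i := by rw [← Finset.mul_sum, hu's, mul_one]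
      have h2 : ∑ i, s * u' i ≤ ∑ i, A.mulVec u' i :=
        Finset.sum_le_sum fun i _ => hsu' i
      have h3 : ∑ i, A.mulVec u' i ≤ C := by
        rw [hC]
        refine Finset.sum_le_sum fun i _ => ?_
        rw [Matrix.mulVec, dotProduct]
        refine Finset.sum_le_sum fun j _ => ?_
        exact mul_le_of_le_one_right (hA i j) (hu'1 j)
      linarith
    have : (s, u') ∈ K := (memK _ _).2 ⟨⟨hs.le, hsC⟩, fun i => ⟨hu'0 i, hu'1 i⟩, hu's, hsu'⟩
    exact hmax this
  have hxj : ∃ j, 0 < x j := by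
    by_contra h
    push_neg at h
    have h0 : ∑ i, x i = 0 := Finset.sum_eq_zero fun i _ => le_antisymm (h i) (hxI i).1
    rw [hxs] at h0
    norm_num at h0
  have hxne : x ≠ 0 := by
    obtain ⟨j, hj⟩ := hxj
    exact fun h => hj.ne' (congrFun h j)
  have hAk : ∀ u : Fin n → ℝ, (∀ i, 0 ≤ u i) → u ≠ 0 → ∀ i, 0 < (A ^ k).mulVec u i := by
    intro u hu0 hune i
    obtain ⟨j0, hj0⟩ : ∃ j, 0 < u j := by
      by_contra h
      push_neg at h
      exact hune (funext fun j => le_antisymm (h j) (hu0 j))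
    rw [Matrix.mulVec, dotProduct]
    have h1 : (A ^ k) i j0 * u j0 ≤ ∑ j, (A ^ k) i j * u j :=
      Finset.single_le_sum (fun j _ => mul_nonneg (hpos i j).le (hu0 j)) (mem_univ j0)
    exact lt_of_lt_of_le (mul_pos (hpos i j0) hj0) h1
  have heig : A.mulVec x = r • x := by
    by_contra hweq
    set w : Fin n → ℝ := A.mulVec x - r • x with hwdef
    have hw0 : ∀ i, 0 ≤ w i := by
      intro i
      simp only [hwdef, Pi.sub_apply, Pi.smul_apply, smul_eq_mul]
      linarith [hxCW i]
    have hwne : w ≠ 0 := fun h => hweq (sub_eq_zero.1 h)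
    set y : Fin n → ℝ := (A ^ k).mulVec x with hy
    have hy0 : ∀ i, 0 < y i := hAk x (fun i => (hxI i).1) hxne
    have hyne : y ≠ 0 := fun h => (hy0 ⟨0, hn⟩).ne' (congrFun h ⟨0, hn⟩)
    have hyA : ∀ i, A.mulVec y i - r * y i = (A ^ k).mulVec w i := by
      intro i
      have h1 : A.mulVec y = (A ^ k).mulVec (A.mulVec x) := by
        rw [hy, Matrix.mulVec_mulVec, Matrix.mulVec_mulVec, ← pow_succ, ← pow_succ']
      have h2 : r • y = (A ^ k).mulVec (r • x) := by rw [hy, Matrix.mulVec_smul]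
      have h3 : (A ^ k).mulVec w = (A ^ k).mulVec (A.mulVec x) - (A ^ k).mulVec (r • x) := by
        rw [hwdef, Matrix.mulVec_sub]
      rw [h1, h3]
      have h4 : r * y i = (A ^ k *ᵥ r • x) i := by
        rw [← h2]; simp [Pi.smul_apply, smul_eq_mul]
      rw [h4]
      simp [Pi.sub_apply]
    have hlt : ∀ i, r * y i < A.mulVec y i := by
      intro i
      have h4 := hAk w hw0 hwne i
      have h5 := hyA i
      linarith
    set s : ℝ := Finset.univ.inf' hne (fun i => A.mulVec y i / y i) with hsd
    have hrs : r < s := by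
      rw [hsd, Finset.lt_inf'_iff]
      intro i _
      rw [lt_div_iff₀ (hy0 i)]
      exact hlt i
    have hsy : ∀ i, s * y i ≤ A.mulVec y i := by
      intro i
      rw [← le_div_iff₀ (hy0 i)]
      exact Finset.inf'_le _ (mem_univ i)
    have := hub s y (fun i => (hy0 i).le) hyne hsy
    linarith
  have hpow : ∀ m : ℕ, (A ^ m).mulVec x = r ^ m • x := by
    intro m
    induction m with
    | zero => simp [Matrix.one_mulVec]
    | succ m ih =>
        rw [pow_succ, ← Matrix.mulVec_mulVec, heig, Matrix.mulVec_smul, ih, smul_smul,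
          ← pow_succ']
  have hrk : 0 < r ^ k := by
    obtain ⟨j, hj⟩ := hxj
    have h1 : 0 < (A ^ k).mulVec x j := hAk x (fun i => (hxI i).1) hxne j
    rw [hpow k] at h1
    simp only [Pi.smul_apply, smul_eq_mul] at h1
    nlinarith
  have hr : 0 < r := by
    rcases hr0.lt_or_eq with h | h
    · exact h
    · exfalso
      rw [← h, zero_pow hk.ne'] at hrk
      exact lt_irrefl 0 hrk
  have hx : ∀ i, 0 < x i := by
    intro i
    have h1 : 0 < (A ^ k).mulVec x i := hAk x (fun i => (hxI i).1) hxne i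
    rw [hpow k] at h1
    simp only [Pi.smul_apply, smul_eq_mul] at h1
    nlinarith [(hxI i).1]
  exact ⟨r, x, hr, hx, heig, hub⟩

    

lemma matrix_pow_map_cast {n : ℕ} {R : Type*} [CommRing R] (A : Matrix (Fin n) (Fin n) ℤ) (k : ℕ) :
    (A.map (Int.cast : ℤ → R)) ^ k = (A ^ k).map (Int.cast : ℤ → R) := by
  have h1 : ∀ M : Matrix (Fin n) (Fin n) ℤ, M.map (Int.cast : ℤ → R) =
      (Int.castRingHom R).mapMatrix M := fun M => rfl
  rw [h1, h1, ← map_pow]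

lemma pf_main {n : ℕ} (hn : 0 < n) (A : Matrix (Fin n) (Fin n) ℤ)
    (hA : ∀ i j, 0 ≤ A i j) (k : ℕ) (hk : 0 < k) (hkpos : ∀ i j, 0 < (A ^ k) i j) :
    ∃ (r : ℝ) (x : Fin n → ℝ), 0 < r ∧ (∀ i, 0 < x i) ∧
      (A.map (Int.cast : ℤ → ℝ)).mulVec x = r • x ∧
      sSup {r' : ℝ | ∃ μ : ℂ, (A.map (Int.cast : ℤ → ℂ)).charpoly.IsRoot μ ∧
        r' = ‖μ‖} = r := by
  set AR : Matrix (Fin n) (Fin n) ℝ := A.map (Int.cast : ℤ → ℝ) with hAR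
  set AC : Matrix (Fin n) (Fin n) ℂ := A.map (Int.cast : ℤ → ℂ) with hAC
  have hAR0 : ∀ i j, 0 ≤ AR i j := by
    intro i j
    simp only [hAR, Matrix.map_apply]
    exact_mod_cast hA i j
  have hARk : ∀ i j, 0 < (AR ^ k) i j := by
    intro i j
    rw [hAR, matrix_pow_map_cast]
    simp only [Matrix.map_apply]
    exact_mod_cast hkpos i j
  obtain ⟨r, x, hr, hx, heig, hub⟩ := pf_exists hn AR hAR0 k hk hARk
  have hxne : x ≠ 0 := fun h => (hx ⟨0, hn⟩).ne' (congrFun h ⟨0, hn⟩)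
  refine ⟨r, x, hr, hx, heig, ?_⟩
  have hgreat : IsGreatest {r' : ℝ | ∃ μ : ℂ, AC.charpoly.IsRoot μ ∧ r' = ‖μ‖} r := by
    constructor
    · -- r is attained at μ = r
      refine ⟨(r : ℂ), ?_, by rw [Complex.norm_of_nonneg hr.le]⟩
      rw [Polynomial.IsRoot, charpoly_eval']
      have hdetR : (Matrix.diagonal (fun _ : Fin n => r) - AR).det = 0 := by
        rw [← Matrix.exists_mulVec_eq_zero_iff]
        refine ⟨x, hxne, ?_⟩
        funext i
        simp only [Matrix.sub_mulVec, Matrix.mulVec_diagonal, heig, Pi.sub_apply,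
          Pi.smul_apply, smul_eq_mul, Pi.zero_apply]
        ring
      have hmap : (Matrix.diagonal (fun _ : Fin n => r) - AR).map (⇑Complex.ofRealHom)
          = Matrix.diagonal (fun _ : Fin n => (r : ℂ)) - AC := by
        ext i j
        by_cases h : i = j <;>
          simp [h, Matrix.map_apply, Matrix.diagonal, hAR, hAC]
      calc (Matrix.diagonal (fun _ : Fin n => (r:ℂ)) - AC).det
          = Complex.ofRealHom ((Matrix.diagonal (fun _ : Fin n => r) - AR).det) := by
            rw [← hmap, ← RingHom.mapMatrix_apply (Complex.ofRealHom : ℝ →+* ℂ), ← RingHom.map_det]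
        _ = 0 := by rw [hdetR]; exact map_zero _
    · rintro r' ⟨μ, hroot, rfl⟩
      rw [Polynomial.IsRoot, charpoly_eval'] at hroot
      obtain ⟨v, hvne, hv⟩ := (Matrix.exists_mulVec_eq_zero_iff).2 hroot
      have hmu : ∀ i, μ * v i = ∑ j, (A i j : ℂ) * v j := by
        intro i
        have := congrFun hv i
        simp only [Matrix.sub_mulVec, Matrix.mulVec_diagonal, Pi.sub_apply, Pi.zero_apply,
          sub_eq_zero] at this
        rw [this]
        simp [Matrix.mulVec, dotProduct, hAC, Matrix.map_apply]
      set u : Fin n → ℝ := fun i => ‖v i‖ with hu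
      have hu0 : ∀ i, 0 ≤ u i := fun i => norm_nonneg _
      have hune : u ≠ 0 := by
        intro h
        apply hvne
        funext i
        have := congrFun h i
        simp only [hu, Pi.zero_apply] at this
        exact norm_eq_zero.1 this
      have hcw : ∀ i, ‖μ‖ * u i ≤ AR.mulVec u i := by
        intro i
        show ‖μ‖ * ‖v i‖ ≤ _
        rw [← norm_mul, hmu i, Matrix.mulVec, dotProduct]
        calc ‖∑ j, (A i j : ℂ) * v j‖
            ≤ ∑ j, ‖(A i j : ℂ) * v j‖ := by
              exact norm_sum_le _ _
          _ = ∑ j, AR i j * ‖v j‖ := by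
              refine Finset.sum_congr rfl fun j _ => ?_
              have habs : ‖(A i j : ℂ)‖ = AR i j := by
                rw [hAR]
                simp only [Matrix.map_apply, Complex.norm_intCast, ← Int.cast_abs]
                exact_mod_cast congrArg (Int.cast : ℤ → ℝ) (_root_.abs_of_nonneg (hA i j))
              rw [norm_mul, habs]
          _ = ∑ j, AR i j * u j := rfl
      exact hub ‖μ‖ u hu0 hune hcw
  exact hgreat.csSup_eq

lemma powers_inj (lam : ℝ) (hint : IsIntegral ℤ lam)
    (c : Fin (minpoly ℤ lam).natDegree → ℤ)
    (h : ∑ k, (c k : ℝ) * lam ^ (k : ℕ) = 0) : c = 0 := by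
  have hd0 : 0 < (minpoly ℤ lam).natDegree := minpoly.natDegree_pos hint
  have hintQ : IsIntegral ℚ lam := hint.tower_top
  have hmq : minpoly ℚ lam = (minpoly ℤ lam).map (algebraMap ℤ ℚ) :=
    minpoly.isIntegrallyClosed_eq_field_fractions ℚ ℝ hint
  have hmqd : (minpoly ℚ lam).natDegree = (minpoly ℤ lam).natDegree := by
    rw [hmq, (minpoly.monic hint).natDegree_map]
  have haev : aeval lam (∑ k : Fin (minpoly ℤ lam).natDegree, C (c k : ℚ) * X ^ (k : ℕ)) = 0 := by
    rw [map_sum]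
    have he : ∀ k : Fin (minpoly ℤ lam).natDegree, aeval lam (C (c k : ℚ) * X ^ (k : ℕ))
        = (c k : ℝ) * lam ^ (k : ℕ) := by
      intro k
      rw [_root_.map_mul, aeval_C, map_pow, aeval_X]
      simp only [eq_ratCast]
      push_cast
      ring
    rw [Finset.sum_congr rfl fun k _ => he k]
    exact h
  have hPz : (∑ k : Fin (minpoly ℤ lam).natDegree, C (c k : ℚ) * X ^ (k : ℕ)) = 0 := by
    by_contra hPne
    have hdvd := minpoly.dvd ℚ lam haev
    have h1 : (minpoly ℤ lam).natDegree
        ≤ (∑ k : Fin (minpoly ℤ lam).natDegree, C (c k : ℚ) * X ^ (k : ℕ)).natDegree := by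
      have h1' := Polynomial.natDegree_le_of_dvd hdvd hPne
      rw [hmqd] at h1'
      exact h1'
    have h2 : (∑ k : Fin (minpoly ℤ lam).natDegree, C (c k : ℚ) * X ^ (k : ℕ)).natDegree
        ≤ (minpoly ℤ lam).natDegree - 1 := by
      refine Polynomial.natDegree_sum_le_of_forall_le _ _ fun k _ => ?_
      refine le_trans (Polynomial.natDegree_C_mul_X_pow_le _ _) ?_
      omega
    omega
  funext k0
  have hco := congrArg (fun Q : ℚ[X] => Q.coeff (k0 : ℕ)) hPz
  simp only [Polynomial.finset_sum_coeff, Polynomial.coeff_C_mul,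
    Polynomial.coeff_X_pow, Polynomial.coeff_zero, mul_ite, mul_one, mul_zero] at hco
  rw [Finset.sum_eq_single k0 (fun k _ hk => by
      rw [if_neg (fun hc => hk (Fin.val_injective hc.symm))]) (fun hk => absurd (mem_univ k0) hk)]
    at hco
  rw [if_pos rfl] at hco
  exact_mod_cast hco
lemma companion_pair (p : ℤ[X]) (lam : ℝ) (hd0 : 0 < p.natDegree)
    (hmonic : p.Monic) (hroot : Polynomial.aeval lam p = 0)
    (z : Fin p.natDegree → ℤ) :
    ∑ k, (((companion p).mulVec z) k : ℝ) * lam ^ (k : ℕ)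
      = lam * ∑ k, (z k : ℝ) * lam ^ (k : ℕ) := by
  have hsum0 : ∑ k ∈ Finset.range p.natDegree, (p.coeff k : ℝ) * lam ^ k = - lam ^ p.natDegree := by
    have h0 := hroot
    rw [Polynomial.aeval_eq_sum_range, Finset.sum_range_succ] at h0
    have hlc : p.coeff p.natDegree = 1 := hmonic.coeff_natDegree
    simp only [zsmul_eq_mul, hlc, Int.cast_one, one_mul] at h0
    linarith
  have hcol : ∀ j : Fin p.natDegree,
      ∑ k : Fin p.natDegree, ((companion p) k j : ℝ) * lam ^ (k : ℕ)
      = lam ^ ((j : ℕ) + 1) := by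
    intro j
    by_cases hj : (j : ℕ) = p.natDegree - 1
    · have hent : ∀ k : Fin p.natDegree, (companion p) k j = - p.coeff (k : ℕ) := by
        intro k
        show (if (k : ℕ) = (j : ℕ) + 1 then 1
          else if (j : ℕ) = p.natDegree - 1 then - p.coeff (k : ℕ) else 0) = _
        rw [if_neg (by omega : ¬ (k : ℕ) = (j : ℕ) + 1), if_pos hj]
      have hstep : ∑ k : Fin p.natDegree, ((companion p) k j : ℝ) * lam ^ (k : ℕ)
          = - ∑ k ∈ Finset.range p.natDegree, (p.coeff k : ℝ) * lam ^ k := by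
        rw [← Fin.sum_univ_eq_sum_range (fun k => (p.coeff k : ℝ) * lam ^ k) p.natDegree,
          ← Finset.sum_neg_distrib]
        refine Finset.sum_congr rfl fun k _ => ?_
        rw [hent k]
        push_cast
        ring
      rw [hstep, hsum0, neg_neg]
      congr 1
      omega
    · have hjd : (j : ℕ) + 1 < p.natDegree := by
        have := j.isLt
        omega
      have hent0 : ∀ k : Fin p.natDegree, (k : ℕ) ≠ (j : ℕ) + 1 → (companion p) k j = 0 := by
        intro k hk
        show (if (k : ℕ) = (j : ℕ) + 1 then 1
          else if (j : ℕ) = p.natDegree - 1 then - p.coeff (k : ℕ) else 0) = 0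
        rw [if_neg hk, if_neg hj]
      have hent1 : (companion p) ⟨(j : ℕ) + 1, hjd⟩ j = 1 := by
        show (if (((⟨(j : ℕ) + 1, hjd⟩ : Fin p.natDegree)) : ℕ) = (j : ℕ) + 1 then 1
          else if (j : ℕ) = p.natDegree - 1 then - p.coeff _ else 0) = 1
        rw [if_pos rfl]
      rw [Finset.sum_eq_single (⟨(j : ℕ) + 1, hjd⟩ : Fin p.natDegree)
        (fun k _ hk => by
          rw [hent0 k (fun hc => hk (by ext; exact hc)), Int.cast_zero, zero_mul])
        (fun hk => absurd (mem_univ _) hk)]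
      rw [hent1]
      norm_num
  calc ∑ k, (((companion p).mulVec z) k : ℝ) * lam ^ (k : ℕ)
      = ∑ k : Fin p.natDegree, ∑ j : Fin p.natDegree,
          ((companion p) k j : ℝ) * (z j : ℝ) * lam ^ (k : ℕ) := by
        refine Finset.sum_congr rfl fun k _ => ?_
        rw [Matrix.mulVec, dotProduct]
        push_cast
        rw [Finset.sum_mul]
    _ = ∑ j : Fin p.natDegree, (z j : ℝ) *
          ∑ k : Fin p.natDegree, ((companion p) k j : ℝ) * lam ^ (k : ℕ) := by
        rw [Finset.sum_comm]
        refine Finset.sum_congr rfl fun j _ => ?_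
        rw [Finset.mul_sum]
        refine Finset.sum_congr rfl fun k _ => ?_
        ring
    _ = ∑ j : Fin p.natDegree, (z j : ℝ) * lam ^ ((j : ℕ) + 1) := by
        refine Finset.sum_congr rfl fun j _ => ?_
        rw [hcol j]
    _ = lam * ∑ k, (z k : ℝ) * lam ^ (k : ℕ) := by
        rw [Finset.mul_sum]
        refine Finset.sum_congr rfl fun j _ => ?_
        ring

lemma rat_clear (a : ℚ) (N : ℕ) (h : a.den ∣ N) : ∃ m : ℤ, (m : ℚ) = a * N := by
  obtain ⟨t, ht⟩ := h
  refine ⟨a.num * t, ?_⟩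
  have hden : ((a.den : ℚ)) ≠ 0 := by exact_mod_cast a.den_nz
  have key : a * (a.den : ℚ) = a.num :=
    ((div_eq_iff hden).mp (Rat.num_div_den a)).symm
  rw [ht]
  push_cast
  rw [← mul_assoc, key]

theorem lind_converse (lam : ℝ) (hlam : IsPerron lam)
    (n : ℕ) (A : Matrix (Fin n) (Fin n) ℤ)
    (hA : ∀ i j, 0 ≤ A i j) (hap : IsAperiodic A) (hs : specRad A = lam) :
    ∃ z : Fin n → Fin (minpoly ℤ lam).natDegree → ℤ,
      (∀ i, (companion (minpoly ℤ lam)).mulVec (z i) = ∑ j, A i j • z j) ∧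
      ∀ i, 0 < ∑ k, (z i k : ℝ) * lam ^ (k : ℕ) := by
  obtain ⟨hlam1, hint, -⟩ := hlam
  rcases Nat.eq_zero_or_pos n with hn0 | hn
  · -- n = 0 is impossible
    exfalso
    subst hn0
    have hempty : {r : ℝ | ∃ μ : ℂ, (A.map (Int.cast : ℤ → ℂ)).charpoly.IsRoot μ ∧
        r = ‖μ‖} = ∅ := by
      rw [Set.eq_empty_iff_forall_notMem]
      rintro r ⟨μ, hroot, -⟩
      rw [Polynomial.IsRoot, charpoly_eval', Matrix.det_isEmpty] at hroot
      exact one_ne_zero hroot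
    rw [specRad, hempty, Real.sSup_empty] at hs
    linarith
  obtain ⟨k, hk, hkpos⟩ := hap
  obtain ⟨r, x, hr, hx, heig, hsr⟩ := pf_main hn A hA k hk hkpos
  have hrl : r = lam := by rw [specRad] at hs; rw [← hs, ← hsr]
  subst hrl
  set AR : Matrix (Fin n) (Fin n) ℝ := A.map (Int.cast : ℤ → ℝ) with hAR
  have hxne : x ≠ 0 := fun h => (hx ⟨0, hn⟩).ne' (congrFun h ⟨0, hn⟩)
  have hintQ : IsIntegral ℚ r := hint.tower_top
  set d := (minpoly ℤ r).natDegree with hdd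
  have hd0 : 0 < d := minpoly.natDegree_pos hint
  have hmq : minpoly ℚ r = (minpoly ℤ r).map (algebraMap ℤ ℚ) :=
    minpoly.isIntegrallyClosed_eq_field_fractions ℚ ℝ hint
  have hmqd : (minpoly ℚ r).natDegree = d := by
    rw [hmq, (minpoly.monic hint).natDegree_map]
  -- positivity of AR^k entries
  have hARk : ∀ i j, 0 < (AR ^ k) i j := by
    intro i j
    rw [hAR, matrix_pow_map_cast]
    simp only [Matrix.map_apply]
    exact_mod_cast hkpos i j
  -- the intermediate field
  set F : IntermediateField ℚ ℝ := IntermediateField.adjoin ℚ ({r} : Set ℝ) with hF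
  have hrF : r ∈ F := IntermediateField.subset_adjoin ℚ {r} rfl
  set rF : F := ⟨r, hrF⟩ with hrFdef
  have hcoe_r : algebraMap F ℝ rF = r := rfl
  have hinj : Function.Injective (algebraMap F ℝ) := (algebraMap F ℝ).injective
  set MF : Matrix (Fin n) (Fin n) F :=
    Matrix.diagonal (fun _ : Fin n => rF) - A.map (Int.cast : ℤ → F) with hMF
  have hmapF : MF.map (algebraMap F ℝ) = Matrix.diagonal (fun _ : Fin n => r) - AR := by
    ext i j
    by_cases h : i = j <;>
      simp [hMF, h, Matrix.map_apply, Matrix.diagonal, hAR, hcoe_r, hrFdef, map_intCast]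
  have hdetR : (Matrix.diagonal (fun _ : Fin n => r) - AR).det = 0 := by
    rw [← Matrix.exists_mulVec_eq_zero_iff]
    refine ⟨x, hxne, ?_⟩
    funext i
    simp only [Matrix.sub_mulVec, Matrix.mulVec_diagonal, heig, Pi.sub_apply,
      Pi.smul_apply, smul_eq_mul, Pi.zero_apply]
    ring
  have hdetF : MF.det = 0 := by
    apply hinj
    rw [RingHom.map_det, RingHom.mapMatrix_apply, hmapF, hdetR, map_zero]
  obtain ⟨v, hvne, hveq⟩ := (Matrix.exists_mulVec_eq_zero_iff).2 hdetF
  -- the real vector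
  have hveq' : ∀ i, rF * v i = ∑ j, (A i j : F) * v j := by
    intro i
    have h1 := congrFun hveq i
    simp only [hMF, Matrix.sub_mulVec, Matrix.mulVec_diagonal, Pi.sub_apply, Pi.zero_apply,
      sub_eq_zero] at h1
    rw [h1]
    simp [Matrix.mulVec, dotProduct, Matrix.map_apply]
  have hvr_eig : ∀ (w : Fin n → F), (∀ i, rF * w i = ∑ j, (A i j : F) * w j) →
      AR.mulVec (fun i => algebraMap F ℝ (w i)) = r • (fun i => algebraMap F ℝ (w i)) := by
    intro w hw
    funext i
    show (AR.mulVec _) i = r * algebraMap F ℝ (w i)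
    calc (AR.mulVec fun i => algebraMap F ℝ (w i)) i
        = algebraMap F ℝ (∑ j, (A i j : F) * w j) := by
          rw [Matrix.mulVec, dotProduct, map_sum]
          refine Finset.sum_congr rfl fun j _ => ?_
          rw [_root_.map_mul, map_intCast]
          rfl
      _ = algebraMap F ℝ (rF * w i) := by rw [hw i]
      _ = r * algebraMap F ℝ (w i) := by rw [_root_.map_mul, hcoe_r]
  have hvr := hvr_eig v hveq'
  obtain ⟨c, hc⟩ := kernel_unique hn AR k hARk r hr x hx heig
    (fun i => algebraMap F ℝ (v i)) hvr
  have hcne : c ≠ 0 := by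
    intro h
    apply hvne
    funext i
    apply hinj
    have := congrFun hc i
    simp only [h, Pi.smul_apply, smul_eq_mul, zero_mul] at this
    rw [this]
    exact (map_zero _).symm
  -- make the eigenvector positive
  obtain ⟨vq, hvq_eq, hvq_pos⟩ : ∃ vq : Fin n → F,
      (∀ i, rF * vq i = ∑ j, (A i j : F) * vq j) ∧
      (∀ i, algebraMap F ℝ (vq i) = |c| * x i) := by
    rcases hcne.lt_or_gt with hneg | hpos
    · refine ⟨-v, fun i => ?_, fun i => ?_⟩
      · show rF * (-v) i = ∑ j, (A i j : F) * (-v) j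
        have h2 : ∑ j, (A i j : F) * (-v) j = -∑ j, (A i j : F) * v j := by
          rw [← Finset.sum_neg_distrib]
          exact Finset.sum_congr rfl fun j _ => by simp [mul_neg]
        rw [h2, ← hveq' i]
        simp [mul_neg]
      · simp only [Pi.neg_apply, map_neg]
        have := congrFun hc i
        simp only [Pi.smul_apply, smul_eq_mul] at this
        rw [this, abs_of_neg hneg]
        ring
    · refine ⟨v, hveq', fun i => ?_⟩
      have := congrFun hc i
      simp only [Pi.smul_apply, smul_eq_mul] at this
      rw [this, abs_of_pos hpos]
  have hvqr_pos : ∀ i, 0 < algebraMap F ℝ (vq i) := by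
    intro i
    rw [hvq_pos i]
    exact mul_pos (abs_pos.2 hcne) (hx i)
  have hvqr := hvr_eig vq hvq_eq
  -- representation by rational polynomials of degree < d
  have hrep : ∀ i, ∃ rqi : ℚ[X], rqi.natDegree < d ∧
      aeval r rqi = algebraMap F ℝ (vq i) := by
    intro i
    have hmem : (algebraMap F ℝ (vq i)) ∈ Algebra.adjoin ℚ ({r} : Set ℝ) := by
      rw [← IntermediateField.adjoin_simple_toSubalgebra_of_isAlgebraic hintQ.isAlgebraic,
        IntermediateField.mem_toSubalgebra]
      exact (vq i).2
    rw [Algebra.adjoin_singleton_eq_range_aeval, AlgHom.mem_range] at hmem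
    obtain ⟨g, hg⟩ := hmem
    have hm : (minpoly ℚ r).Monic := minpoly.monic hintQ
    refine ⟨g %ₘ (minpoly ℚ r), ?_, ?_⟩
    · by_cases h0 : g %ₘ (minpoly ℚ r) = 0
      · rw [h0, Polynomial.natDegree_zero]; exact hd0
      · have := Polynomial.natDegree_lt_natDegree h0 (Polynomial.degree_modByMonic_lt g hm)
        omega
    · have hdiv := Polynomial.modByMonic_add_div g (minpoly ℚ r)
      have := congrArg (aeval r) hdiv
      rw [map_add, _root_.map_mul, minpoly.aeval, zero_mul, add_zero] at this
      rw [this, hg]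
  choose rq hrqdeg hrqval using hrep
  -- clear denominators
  set N : ℕ := ∏ i : Fin n, ∏ k0 : Fin d, ((rq i).coeff (k0 : ℕ)).den with hN
  have hNpos : 0 < N := by
    refine Finset.prod_pos fun i _ => Finset.prod_pos fun k0 _ => ?_
    exact (rq i).coeff _ |>.pos
  have hdvdN : ∀ (i : Fin n) (k0 : Fin d), ((rq i).coeff (k0 : ℕ)).den ∣ N := by
    intro i k0
    exact dvd_trans
      (Finset.dvd_prod_of_mem (fun k1 : Fin d => ((rq i).coeff (k1 : ℕ)).den) (mem_univ k0))
      (Finset.dvd_prod_of_mem (fun i => ∏ k0 : Fin d, ((rq i).coeff (k0 : ℕ)).den) (mem_univ i))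
  choose z hz using fun (i : Fin n) (k0 : Fin d) =>
    rat_clear ((rq i).coeff (k0 : ℕ)) N (hdvdN i k0)
  have hzR : ∀ i k0, ((z i k0 : ℤ) : ℝ) = ((rq i).coeff (k0 : ℕ) : ℝ) * N := by
    intro i k0
    exact_mod_cast congrArg (fun q : ℚ => (q : ℝ)) (hz i k0)
  have hphi : ∀ i, ∑ k0 : Fin d, (z i k0 : ℝ) * r ^ (k0 : ℕ) = N * algebraMap F ℝ (vq i) := by
    intro i
    rw [← hrqval i, Polynomial.aeval_eq_sum_range' (hrqdeg i) r,
      ← Fin.sum_univ_eq_sum_range (fun k0 => (rq i).coeff k0 • r ^ k0) d, Finset.mul_sum]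
    refine Finset.sum_congr rfl fun k0 _ => ?_
    rw [hzR i k0, Rat.smul_def]
    push_cast
    ring
  refine ⟨z, ?_, ?_⟩
  · intro i
    have hL := companion_pair (minpoly ℤ r) r hd0 (minpoly.monic hint) (minpoly.aeval ℤ r) (z i)
    have hR : ∑ k0 : Fin d, (((∑ j, A i j • z j) k0 : ℤ) : ℝ) * r ^ (k0 : ℕ)
        = r * ∑ k0 : Fin d, (z i k0 : ℝ) * r ^ (k0 : ℕ) := by
      have h1 : ∀ k0 : Fin d, (((∑ j, A i j • z j) k0 : ℤ) : ℝ)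
          = ∑ j, (A i j : ℝ) * (z j k0 : ℝ) := by
        intro k0
        rw [Finset.sum_apply, Int.cast_sum]
        exact Finset.sum_congr rfl fun j _ => by rw [Pi.smul_apply, smul_eq_mul, Int.cast_mul]
      calc ∑ k0 : Fin d, (((∑ j, A i j • z j) k0 : ℤ) : ℝ) * r ^ (k0 : ℕ)
          = ∑ k0 : Fin d, ∑ j, (A i j : ℝ) * (z j k0 : ℝ) * r ^ (k0 : ℕ) := by
            refine Finset.sum_congr rfl fun k0 _ => ?_
            rw [h1 k0, Finset.sum_mul]
        _ = ∑ j, (A i j : ℝ) * ∑ k0 : Fin d, (z j k0 : ℝ) * r ^ (k0 : ℕ) := by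
            rw [Finset.sum_comm]
            refine Finset.sum_congr rfl fun j _ => ?_
            rw [Finset.mul_sum]
            refine Finset.sum_congr rfl fun k0 _ => ?_
            ring
        _ = ∑ j, (A i j : ℝ) * (N * algebraMap F ℝ (vq j)) :=
            Finset.sum_congr rfl fun j _ => by rw [hphi j]
        _ = (N : ℝ) * (AR.mulVec (fun j => algebraMap F ℝ (vq j)) i) := by
            rw [Matrix.mulVec, dotProduct, Finset.mul_sum]
            refine Finset.sum_congr rfl fun j _ => ?_
            rw [hAR]
            simp only [Matrix.map_apply]
            ring
        _ = (N : ℝ) * (r * algebraMap F ℝ (vq i)) := by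
            rw [hvqr]
            simp only [Pi.smul_apply, smul_eq_mul]
        _ = r * ∑ k0 : Fin d, (z i k0 : ℝ) * r ^ (k0 : ℕ) := by
            rw [hphi i]
            ring
    have hdiff : ∑ k0 : Fin d,
        ((((companion (minpoly ℤ r)).mulVec (z i) - ∑ j, A i j • z j) k0 : ℤ) : ℝ)
          * r ^ (k0 : ℕ) = 0 := by
      have hsub : ∀ k0 : Fin d,
          ((((companion (minpoly ℤ r)).mulVec (z i) - ∑ j, A i j • z j) k0 : ℤ) : ℝ)
          = (((companion (minpoly ℤ r)).mulVec (z i)) k0 : ℝ)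
            - (((∑ j, A i j • z j) k0 : ℤ) : ℝ) := by
        intro k0
        rw [Pi.sub_apply]
        push_cast
        ring
      rw [Finset.sum_congr rfl fun k0 _ => by rw [hsub k0, sub_mul]]
      rw [Finset.sum_sub_distrib, hL, hR, sub_self]
    have hzero := powers_inj r hint _ hdiff
    exact sub_eq_zero.1 hzero
  · intro i
    rw [hphi i]
    exact mul_pos (by exact_mod_cast hNpos) (hvqr_pos i)
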